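/- For a simple root α ∈ Δ and a positive integer k, the set S(α,k) is nonempty if and only if 1 ≤ k ≤ h_α, where h_α is the coefficient of α in the highest root α̃. -/
import Mathlib


open scoped RealInnerProductSpace

attribute [local instance] Classical.propDecidable

noncomputable section

/-- The coroot `α∨ = (2/⟨α,α⟩) • α` of a vector `α` in a real inner product space
(using the inner product to identify `V` with `V*`). -/
def coroot {V : Type*} [NormedAddCommGroup V] [InnerProductSpace ℝ V] (α : V) : V :=
  (2 / ⟪α, α⟫) • α

/-- A finite, reduced, irreducible, crystallographic root system in the real inner
product space `V`.  (The Weyl group automatically acts by isometries, since the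
reflections are defined via the inner product.) -/
structure IsRootSystem {V : Type*} [NormedAddCommGroup V] [InnerProductSpace ℝ V]
    (R : Finset V) : Prop where
  nonempty : R.Nonempty
  zero_not_mem : (0 : V) ∉ R
  span_eq_top : Submodule.span ℝ (R : Set V) = ⊤
  reduced : ∀ α ∈ R, ∀ t : ℝ, t • α ∈ R → t = 1 ∨ t = -1
  reflect_mem : ∀ α ∈ R, ∀ β ∈ R, β - ⟪β, coroot α⟫ • α ∈ R
  crystallographic : ∀ α ∈ R, ∀ β ∈ R, ∃ n : ℤ, ⟪β, coroot α⟫ = (n : ℝ)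
  irreducible : ∀ S : Set V, (∀ α ∈ R, ∀ β ∈ R, α ∈ S → ⟪α, β⟫ ≠ 0 → β ∈ S) →
    (∃ α ∈ R, α ∈ S) → ∀ β ∈ R, β ∈ S

/-- `Δ` is a base of simple roots for the root system `R`: it is a linearly
independent subset of `R` and every root is a nonnegative or nonpositive integral
combination of elements of `Δ`. -/
structure IsBase {V : Type*} [NormedAddCommGroup V] [InnerProductSpace ℝ V]
    (R Δ : Finset V) : Prop where
  subset : Δ ⊆ R
  indep : LinearIndependent ℝ (fun β : Δ => (β : V))
  expand : ∀ β ∈ R, (∃ c : V → ℕ, β = ∑ δ ∈ Δ, (c δ : ℝ) • δ) ∨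
    (∃ c : V → ℕ, β = -(∑ δ ∈ Δ, (c δ : ℝ) • δ))

section Aux

variable {V : Type*} [NormedAddCommGroup V] [InnerProductSpace ℝ V]

/-- Roots are closed under negation. -/
lemma aux_neg_mem {R : Finset V} (hR : IsRootSystem R) {α : V} (hα : α ∈ R) : -α ∈ R := by
  have h0 : α ≠ 0 := fun e => hR.zero_not_mem (e ▸ hα)
  have hαα : ⟪α, α⟫ ≠ 0 := inner_self_ne_zero.mpr h0
  have h2 : ⟪α, coroot α⟫ = (2 : ℝ) := by
    rw [coroot, real_inner_smul_right]; field_simp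
  have := hR.reflect_mem α hα α hα
  rw [h2, show α - (2:ℝ) • α = -α by module] at this
  exact this

/-- If two roots have positive inner product and are distinct, their difference is a root. -/
lemma aux_sub_mem {R : Finset V} (hR : IsRootSystem R) {α β : V} (hαR : α ∈ R) (hβR : β ∈ R)
    (hpos : 0 < ⟪α, β⟫) (hne : α ≠ β) : α - β ∈ R := by
  have hα0 : α ≠ 0 := fun e => hR.zero_not_mem (e ▸ hαR)
  have hβ0 : β ≠ 0 := fun e => hR.zero_not_mem (e ▸ hβR)
  have hαα : 0 < ⟪α, α⟫ :=
    lt_of_le_of_ne real_inner_self_nonneg (Ne.symm (inner_self_ne_zero.mpr hα0))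
  have hββ : 0 < ⟪β, β⟫ :=
    lt_of_le_of_ne real_inner_self_nonneg (Ne.symm (inner_self_ne_zero.mpr hβ0))
  -- strict Cauchy–Schwarz
  have hCS : ⟪α, β⟫ * ⟪α, β⟫ < ⟪α, α⟫ * ⟪β, β⟫ := by
    rcases lt_or_eq_of_le (real_inner_mul_inner_self_le α β) with hlt | heq
    · exact hlt
    · exfalso
      have hnormα : ⟪α, α⟫ = ‖α‖ * ‖α‖ := real_inner_self_eq_norm_mul_norm α
      have hnormβ : ⟪β, β⟫ = ‖β‖ * ‖β‖ := real_inner_self_eq_norm_mul_norm β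
      have hsq : ⟪α, β⟫ * ⟪α, β⟫ = (‖α‖ * ‖β‖) * (‖α‖ * ‖β‖) := by
        rw [heq, hnormα, hnormβ]; ring
      have hαn : (0:ℝ) < ‖α‖ := norm_pos_iff.mpr hα0
      have hβn : (0:ℝ) < ‖β‖ := norm_pos_iff.mpr hβ0
      have habs : ⟪α, β⟫ = ‖α‖ * ‖β‖ := by
        rcases mul_self_eq_mul_self_iff.mp hsq with h1 | h1
        · exact h1
        · nlinarith
      have hnorm : ‖(⟪α, β⟫ : ℝ)‖ = ‖α‖ * ‖β‖ := by
        rw [Real.norm_eq_abs, abs_of_pos hpos, habs]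
      obtain ⟨r, hr0, hβr⟩ := (norm_inner_eq_norm_iff (𝕜 := ℝ) hα0 hβ0).mp hnorm
      rcases hR.reduced α hαR r (by rw [← hβr]; exact hβR) with h1 | h1
      · exact hne (by rw [hβr, h1, one_smul])
      · have : ⟪α, β⟫ = -⟪α, α⟫ := by
          rw [hβr, h1, real_inner_smul_right]; ring
        linarith
  obtain ⟨na, hna⟩ := hR.crystallographic β hβR α hαR
  obtain ⟨nb, hnb⟩ := hR.crystallographic α hαR β hβR
  have hcoa : ⟪α, coroot β⟫ = 2 / ⟪β, β⟫ * ⟪α, β⟫ := by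
    rw [coroot, real_inner_smul_right]
  have hcob : ⟪β, coroot α⟫ = 2 / ⟪α, α⟫ * ⟪α, β⟫ := by
    rw [coroot, real_inner_smul_right, real_inner_comm β α]
  have hna1 : 1 ≤ na := by
    have : (0:ℝ) < na := by rw [← hna, hcoa]; positivity
    exact_mod_cast this
  have hnb1 : 1 ≤ nb := by
    have : (0:ℝ) < nb := by rw [← hnb, hcob]; positivity
    exact_mod_cast this
  have hprod : (na : ℝ) * nb < 4 := by
    rw [← hna, ← hnb, hcoa, hcob]
    have h4 : (2 / ⟪β, β⟫ * ⟪α, β⟫) * (2 / ⟪α, α⟫ * ⟪α, β⟫)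
        = 4 * (⟪α, β⟫ * ⟪α, β⟫) / (⟪α, α⟫ * ⟪β, β⟫) := by
      field_simp; ring
    rw [h4, div_lt_iff₀ (by positivity)]
    nlinarith [hCS]
  have hprodZ : na * nb < 4 := by exact_mod_cast hprod
  have hone : na = 1 ∨ nb = 1 := by
    by_contra hcon
    push_neg at hcon
    have h1 : 2 ≤ na := by omega
    have h2 : 2 ≤ nb := by omega
    nlinarith
  rcases hone with h1 | h1
  · have := hR.reflect_mem β hβR α hαR
    rw [hna, h1] at this
    simpa using this
  · have := hR.reflect_mem α hαR β hβR
    rw [hnb, h1] at this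
    have := aux_neg_mem hR this
    simpa using this

/-- Coefficients in an expansion over the base are unique. -/
lemma aux_coeff_unique {R Δ : Finset V} (hΔ : IsBase R Δ) (x y : V → ℝ)
    (hxy : ∑ δ ∈ Δ, x δ • δ = ∑ δ ∈ Δ, y δ • δ) : ∀ δ ∈ Δ, x δ = y δ := by
  have h0 : ∑ δ : {x // x ∈ Δ}, (x δ.1 - y δ.1) • (δ.1 : V) = 0 := by
    rw [Finset.sum_coe_sort Δ (fun δ => (x δ - y δ) • δ)]
    simp only [sub_smul, Finset.sum_sub_distrib, hxy, sub_self]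
  intro δ hδ
  have := linearIndependent_iff'.mp hΔ.indep Finset.univ (fun δ => x δ.1 - y δ.1)
    h0 ⟨δ, hδ⟩ (Finset.mem_univ _)
  have h2 : x δ - y δ = 0 := this
  linarith

/-- Inner product of a linear combination of simple roots with the coweight. -/
lemma aux_key {Δ : Finset V} {α : V} (hα : α ∈ Δ) {ϖv : V}
    (hϖv : ∀ β ∈ Δ, ⟪β, ϖv⟫ = if β = α then 1 else 0) (c : V → ℝ) :
    ⟪∑ δ ∈ Δ, c δ • δ, ϖv⟫ = c α := by
  rw [sum_inner]
  rw [Finset.sum_congr rfl (fun δ hδ => by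
    rw [real_inner_smul_left, hϖv δ hδ] : ∀ δ ∈ Δ, ⟪c δ • δ, ϖv⟫
      = c δ * (if δ = α then 1 else 0))]
  simp only [mul_ite, mul_one, mul_zero]
  rw [Finset.sum_ite_eq' Δ α c]
  simp [hα]

/-- The descent argument: given a positive root whose `α`-coefficient is at least `k ≥ 1`,
there is a root whose `α`-coefficient equals `k`. -/
lemma aux_descent {R Δ : Finset V} (hR : IsRootSystem R) (hΔ : IsBase R Δ)
    {α : V} (hα : α ∈ Δ) {ϖv : V}
    (hϖv : ∀ β ∈ Δ, ⟪β, ϖv⟫ = if β = α then 1 else 0) :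
    ∀ n : ℕ, ∀ β ∈ R, ∀ c : V → ℕ, β = ∑ δ ∈ Δ, (c δ : ℝ) • δ → (∑ δ ∈ Δ, c δ) = n →
      ∀ k : ℕ, 1 ≤ k → k ≤ c α → ∃ γ ∈ R, ⟪γ, ϖv⟫ = (k : ℝ) := by
  intro n
  induction n using Nat.strong_induction_on with
  | _ n ih =>
    intro β hβR c hc hcn k hk1 hkc
    have hβϖ : ⟪β, ϖv⟫ = (c α : ℝ) := by rw [hc]; exact aux_key hα hϖv _
    by_cases hkeq : k = c α
    · exact ⟨β, hβR, by rw [hβϖ, hkeq]⟩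
    have hklt : k < c α := lt_of_le_of_ne hkc hkeq
    have hcα2 : 2 ≤ c α := by omega
    have hβ0 : β ≠ 0 := fun e => hR.zero_not_mem (e ▸ hβR)
    have hββ : 0 < ⟪β, β⟫ :=
      lt_of_le_of_ne real_inner_self_nonneg (Ne.symm (inner_self_ne_zero.mpr hβ0))
    -- find a simple root with positive inner product with β
    have hex : ∃ δ ∈ Δ, 0 < ⟪β, δ⟫ := by
      by_contra hcon
      push_neg at hcon
      have hle : ⟪β, β⟫ ≤ 0 := by
        nth_rewrite 2 [hc]
        rw [inner_sum]
        apply Finset.sum_nonpos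
        intro δ hδ
        rw [real_inner_smul_right]
        exact mul_nonpos_of_nonneg_of_nonpos (by positivity) (hcon δ hδ)
      linarith
    obtain ⟨δ, hδΔ, hδpos⟩ := hex
    have hne : β ≠ δ := by
      intro e
      have h1 : ⟪β, ϖv⟫ ≤ 1 := by rw [e, hϖv δ hδΔ]; split <;> norm_num
      rw [hβϖ] at h1
      have : c α ≤ 1 := by exact_mod_cast h1
      omega
    have hβδR : β - δ ∈ R := aux_sub_mem hR hβR (hΔ.subset hδΔ) hδpos hne
    have hβδϖ : ⟪β - δ, ϖv⟫ = (c α : ℝ) - (if δ = α then 1 else 0) := by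
      rw [inner_sub_left, hβϖ, hϖv δ hδΔ]
    have hcα2R : (2:ℝ) ≤ (c α : ℝ) := by exact_mod_cast hcα2
    have hge1 : (1:ℝ) ≤ ⟪β - δ, ϖv⟫ := by
      rw [hβδϖ]; split <;> linarith
    rcases hΔ.expand _ hβδR with ⟨c', hc'⟩ | ⟨c', hc'⟩
    · -- positive expansion: descend
      have hc'ϖ : ⟪β - δ, ϖv⟫ = (c' α : ℝ) := by rw [hc']; exact aux_key hα hϖv _
      -- the coefficients of β are those of β - δ plus the indicator of δ
      have hδsum : ∑ γ ∈ Δ, (if γ = δ then (1:ℝ) else 0) • γ = δ := by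
        simp only [ite_smul, one_smul, zero_smul]
        rw [Finset.sum_ite_eq' Δ δ (fun γ => γ), if_pos hδΔ]
      have hexp : ∑ γ ∈ Δ, (fun γ => (c γ : ℝ)) γ • γ
          = ∑ γ ∈ Δ, (fun γ => (c' γ : ℝ) + if γ = δ then 1 else 0) γ • γ := by
        simp only
        calc ∑ γ ∈ Δ, (c γ : ℝ) • γ = β := hc.symm
          _ = (β - δ) + δ := by abel
          _ = ∑ γ ∈ Δ, ((c' γ : ℝ) • γ) + ∑ γ ∈ Δ, (if γ = δ then (1:ℝ) else 0) • γ := by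
              rw [← hc', hδsum]
          _ = ∑ γ ∈ Δ, ((c' γ : ℝ) + if γ = δ then 1 else 0) • γ := by
              rw [← Finset.sum_add_distrib]
              exact Finset.sum_congr rfl (fun γ _ => (add_smul _ _ _).symm)
      have huniq := aux_coeff_unique hΔ _ _ hexp
      have hsumR : ((∑ γ ∈ Δ, c γ : ℕ) : ℝ) = ((∑ γ ∈ Δ, c' γ : ℕ) : ℝ) + 1 := by
        push_cast
        rw [Finset.sum_congr rfl (fun γ hγ => huniq γ hγ)]
        rw [Finset.sum_add_distrib, Finset.sum_ite_eq' Δ δ (fun _ => (1:ℝ)), if_pos hδΔ]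
      have hsumN : (∑ γ ∈ Δ, c γ) = (∑ γ ∈ Δ, c' γ) + 1 := by exact_mod_cast hsumR
      have hlt : (∑ γ ∈ Δ, c' γ) < n := by omega
      have hkc' : k ≤ c' α := by
        have h1 : (c' α : ℝ) = (c α : ℝ) - (if δ = α then 1 else 0) := by
          rw [← hc'ϖ, hβδϖ]
        have h2 : ((k : ℝ)) ≤ (c' α : ℝ) := by
          have : ((k:ℝ)) + 1 ≤ (c α : ℝ) := by exact_mod_cast hklt
          rw [h1]; split <;> linarith
        exact_mod_cast h2
      exact ih _ hlt (β - δ) hβδR c' hc' rfl k hk1 hkc'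
    · -- negative expansion: impossible
      exfalso
      have h2 : ⟪β - δ, ϖv⟫ = -(c' α : ℝ) := by
        rw [hc', inner_neg_left, aux_key hα hϖv]
      have : (0:ℝ) ≤ (c' α : ℝ) := by positivity
      linarith

end Aux

/-- For a simple root `α` and a positive integer `k`, the set
`S(α,k)` is nonempty if and only if `1 ≤ k ≤ h_α`. -/
theorem statement_4 {V : Type*} [NormedAddCommGroup V] [InnerProductSpace ℝ V]
    [FiniteDimensional ℝ V]
    (R Δ : Finset V) (hR : IsRootSystem R) (hΔ : IsBase R Δ)
    -- `θ = α̃` is the highest root, with coefficients `h_β`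
    (θ : V) (hθR : θ ∈ R)
    (hθhigh : ∀ β ∈ R, ∃ c : V → ℕ, θ - β = ∑ δ ∈ Δ, (c δ : ℝ) • δ)
    (h : V → ℕ)
    (hh : θ = ∑ δ ∈ Δ, (h δ : ℝ) • δ) (hhpos : ∀ δ ∈ Δ, 0 < h δ)
    (α : V) (hα : α ∈ Δ) (k : ℕ) (hk : 1 ≤ k)
    -- the fundamental coweight `ϖ_α∨`
    (ϖv : V) (hϖv : ∀ β ∈ Δ, ⟪β, ϖv⟫ = if β = α then 1 else 0) :
    (R.filter fun β => ⟪β, ϖv⟫ = (k : ℝ)).Nonempty ↔ k ≤ h α := by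
  have hθϖ : ⟪θ, ϖv⟫ = (h α : ℝ) := by rw [hh]; exact aux_key hα hϖv _
  constructor
  · rintro ⟨β, hβ⟩
    rw [Finset.mem_filter] at hβ
    obtain ⟨hβR, hβϖ⟩ := hβ
    obtain ⟨c, hcθ⟩ := hθhigh β hβR
    have hdiff : ⟪θ - β, ϖv⟫ = (c α : ℝ) := by rw [hcθ]; exact aux_key hα hϖv _
    rw [inner_sub_left, hθϖ, hβϖ] at hdiff
    have h0 : (0:ℝ) ≤ (c α : ℝ) := by positivity
    have : (k : ℝ) ≤ (h α : ℝ) := by linarith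
    exact_mod_cast this
  · intro hkh
    obtain ⟨γ, hγR, hγ⟩ := aux_descent hR hΔ hα hϖv (∑ δ ∈ Δ, h δ) θ hθR h hh rfl k hk hkh
    exact ⟨γ, Finset.mem_filter.mpr ⟨hγR, hγ⟩⟩
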